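/- arXiv:1604.02672 — 5 statements merged into one kernel-verified Lean document; each statement's English description precedes it below -/
import Mathlib

section
/- There exists a prime ideal P of C([0,1], ℝ) that contains no nonzero polynomial function, i.e., P is disjoint from the set of nonzero restrictions of real polynomials to [0,1]. -/
open Set Polynomial

abbrev I01 : Set ℝ := Set.Icc 0 1
abbrev R01 := C(I01, ℝ)

def evalHom (γ : I01) : R01 →+* ℝ where
  toFun f := f γ
  map_one' := rfl
  map_mul' _ _ := rfl
  map_zero' := rfl
  map_add' _ _ := rfl

lemma toCMOn_inj {p : Polynomial ℝ} (h : p.toContinuousMapOn I01 = 0) : p = 0 := by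
  apply Polynomial.eq_zero_of_infinite_isRoot
  refine Set.Infinite.mono (fun x hx => ?_) (Set.Icc_infinite (show (0:ℝ) < 1 by norm_num))
  have := congrArg (fun f => f ⟨x, hx⟩) h
  simpa [Polynomial.toContinuousMapOn, Polynomial.toContinuousMap, Polynomial.IsRoot] using this

def polyMonoid : Submonoid R01 where
  carrier := {f | ∃ p : Polynomial ℝ, p ≠ 0 ∧ f = p.toContinuousMapOn I01}
  one_mem' := ⟨1, one_ne_zero, by ext x; simp [Polynomial.toContinuousMapOn, Polynomial.toContinuousMap]⟩
  mul_mem' := by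
    rintro f g ⟨p, hp, rfl⟩ ⟨q, hq, rfl⟩
    exact ⟨p * q, mul_ne_zero hp hq, by ext x; simp [Polynomial.toContinuousMapOn, Polynomial.toContinuousMap]⟩

theorem stmt4 : ∃ P : Ideal R01, P.IsPrime ∧
    ∀ p : Polynomial ℝ, p.toContinuousMapOn I01 ≠ 0 → p.toContinuousMapOn I01 ∉ P := by
  have hdisj : Disjoint ((⊥ : Ideal R01) : Set R01) (polyMonoid : Set R01) := by
    rw [Set.disjoint_left]
    rintro f hf ⟨p, hp, rfl⟩
    exact hp (toCMOn_inj (by simpa using hf))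
  obtain ⟨P, hP, -, hdis⟩ := Ideal.exists_le_prime_disjoint ⊥ polyMonoid hdisj
  refine ⟨P, hP, fun p hp hmem => ?_⟩
  exact Set.disjoint_left.mp hdis hmem ⟨p, fun h => hp (by subst h; ext x; simp [Polynomial.toContinuousMapOn, Polynomial.toContinuousMap]), rfl⟩
end

section
/- If P is a prime ideal of C([0,1], ℝ) and γ₁ < γ₂ are two points in the common zero set V(P), then a contradiction follows; that is, V(P) cannot contain two distinct points. -/
open Set Polynomial

theorem stmt8 (P : Ideal R01) (hP : P.IsPrime) (γ₁ γ₂ : I01)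
    (h1 : ∀ f ∈ P, f γ₁ = 0) (h2 : ∀ f ∈ P, f γ₂ = 0) (hlt : γ₁ < γ₂) :
    False := by
  set m : ℝ := ((γ₁ : ℝ) + γ₂) / 2 with hm
  have hlt' : (γ₁ : ℝ) < γ₂ := hlt
  have h1m : (γ₁ : ℝ) < m := by simp [hm]; linarith
  have h2m : m < (γ₂ : ℝ) := by simp [hm]; linarith
  set f : R01 := ⟨fun x => max (m - x) 0, by fun_prop⟩ with hf
  set g : R01 := ⟨fun x => max ((x : ℝ) - m) 0, by fun_prop⟩ with hg
  have hfg : f * g = 0 := by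
    ext x
    simp only [ContinuousMap.mul_apply, hf, hg, ContinuousMap.coe_mk,
      ContinuousMap.zero_apply]
    rcases le_total (x : ℝ) m with h | h
    · have : (x : ℝ) - m ≤ 0 := by linarith
      simp [max_eq_right this]
    · have : m - (x : ℝ) ≤ 0 := by linarith
      simp [max_eq_right this]
  have hmem : f * g ∈ P := hfg ▸ P.zero_mem
  rcases hP.mem_or_mem hmem with h | h
  · have := h1 f h
    simp only [hf, ContinuousMap.coe_mk] at this
    have : max (m - (γ₁ : ℝ)) 0 = 0 := this
    have h0 : m - (γ₁ : ℝ) ≤ 0 := by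
      by_contra hc
      push_neg at hc
      rw [max_eq_left hc.le] at this
      linarith
    linarith
  · have := h2 g h
    simp only [hg, ContinuousMap.coe_mk] at this
    have : max ((γ₂ : ℝ) - m) 0 = 0 := this
    have h0 : (γ₂ : ℝ) - m ≤ 0 := by
      by_contra hc
      push_neg at hc
      rw [max_eq_left hc.le] at this
      linarith
    linarith
end

section
/- If P is a prime ideal of C([0,1], ℝ), then its common zero set V(P) has exactly one element. -/
open Set Polynomial

theorem stmt9 (P : Ideal R01) (hP : P.IsPrime) :
    ∃! x : I01, ∀ f ∈ P, f x = 0 := by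
  -- existence
  have hVne : ∃ x : I01, ∀ f ∈ P, f x = 0 := by
    by_contra h
    push_neg at h
    have hfull : ContinuousMap.setOfIdeal P = Set.univ := by
      ext x
      simp only [Set.mem_univ, iff_true, ContinuousMap.mem_setOfIdeal]
      obtain ⟨f, hf, hfx⟩ := h x
      exact ⟨f, hf, hfx⟩
    have := ContinuousMap.idealOfSet_ofIdeal_eq_closure (𝕜 := ℝ) P
    rw [hfull] at this
    have htop : ContinuousMap.idealOfSet ℝ (Set.univ : Set I01) = ⊤ := by
      rw [Ideal.eq_top_iff_one, ContinuousMap.mem_idealOfSet]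
      intro x hx
      simp at hx
    rw [htop] at this
    exact P.closure_ne_top hP.ne_top this.symm
  obtain ⟨x, hx⟩ := hVne
  refine ⟨x, hx, ?_⟩
  intro y hy
  by_contra hne
  -- bump functions
  set d := dist x y with hd
  have hdpos : 0 < d := dist_pos.mpr (fun h => hne h.symm)
  let f : R01 := ⟨fun t => max 0 (d/2 - dist t y), by fun_prop⟩
  let g : R01 := ⟨fun t => max 0 (d/2 - dist t x), by fun_prop⟩
  have hfg : f * g = 0 := by
    ext t
    simp only [ContinuousMap.mul_apply, ContinuousMap.zero_apply, f, g,
      ContinuousMap.coe_mk]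
    rcases le_or_gt (d/2 - dist t y) 0 with h1 | h1
    · rw [max_eq_left h1, zero_mul]
    · rcases le_or_gt (d/2 - dist t x) 0 with h2 | h2
      · rw [max_eq_left h2, mul_zero]
      · exfalso
        have := dist_triangle x t y
        rw [dist_comm x t] at this
        linarith
  have hfy : f y = d/2 := by
    simp only [f, ContinuousMap.coe_mk, dist_self, sub_zero]
    exact max_eq_right (by linarith)
  have hgx : g x = d/2 := by
    simp only [g, ContinuousMap.coe_mk, dist_self, sub_zero]
    exact max_eq_right (by linarith)
  have hmem : f * g ∈ P := by rw [hfg]; exact P.zero_mem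
  rcases hP.mem_or_mem hmem with hf | hg
  · have := hy f hf
    rw [hfy] at this; linarith
  · have := hx g hg
    rw [hgx] at this; linarith
end

section
/- Every prime ideal of C([0,1], ℝ) is contained in a unique maximal ideal. -/
open Set Polynomial

/-- A bump function: `max 0 (r - dist z x)`. -/
def bumpIn (x : I01) (r : ℝ) : R01 :=
  ⟨fun z => max 0 (r - dist z x), by fun_prop⟩

def bumpOut (x : I01) (r : ℝ) : R01 :=
  ⟨fun z => max 0 (dist z x - r), by fun_prop⟩

lemma bump_mul_zero (x : I01) (r : ℝ) : bumpIn x r * bumpOut x r = 0 := by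
  ext z
  simp only [ContinuousMap.mul_apply, ContinuousMap.zero_apply, bumpIn, bumpOut,
    ContinuousMap.coe_mk]
  rcases le_total (dist z x) r with h | h
  · have h2 : (0:ℝ) ⊔ (dist z x - r) = 0 := max_eq_left (by linarith)
    rw [h2, mul_zero]
  · have h2 : (0:ℝ) ⊔ (r - dist z x) = 0 := max_eq_left (by linarith)
    rw [h2, zero_mul]

lemma maximal_eq (P : Ideal R01) (hP : P.IsPrime) (M₁ M₂ : Ideal R01)
    (h₁ : M₁.IsMaximal ∧ P ≤ M₁) (h₂ : M₂.IsMaximal ∧ P ≤ M₂) : M₁ = M₂ := by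
  obtain ⟨hM₁, hPM₁⟩ := h₁
  obtain ⟨hM₂, hPM₂⟩ := h₂
  haveI := hM₁; haveI := hM₂
  obtain ⟨x, hx⟩ := (ContinuousMap.ideal_isMaximal_iff M₁).mp hM₁
  obtain ⟨y, hy⟩ := (ContinuousMap.ideal_isMaximal_iff M₂).mp hM₂
  by_cases hxy : x = y
  · rw [← hx, ← hy, hxy]
  · exfalso
    set r : ℝ := dist x y / 2 with hr
    have hrpos : 0 < r := by
      simp [hr, dist_pos.mpr hxy]
    have hmul : bumpIn x r * bumpOut x r = 0 := bump_mul_zero x r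
    have hmem : bumpIn x r * bumpOut x r ∈ P := by rw [hmul]; exact P.zero_mem
    rcases hP.mem_or_mem hmem with hf | hg
    · have : bumpIn x r ∈ M₁ := hPM₁ hf
      rw [← hx] at this
      have h0 : (bumpIn x r) x = 0 :=
        (ContinuousMap.mem_idealOfSet.mp this) (by simp)
      simp only [bumpIn, ContinuousMap.coe_mk, dist_self, sub_zero] at h0
      rw [max_eq_right hrpos.le] at h0
      exact hrpos.ne' h0
    · have : bumpOut x r ∈ M₂ := hPM₂ hg
      rw [← hy] at this
      have h0 : (bumpOut x r) y = 0 :=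
        (ContinuousMap.mem_idealOfSet.mp this) (by simp)
      simp only [bumpOut, ContinuousMap.coe_mk] at h0
      have : dist y x - r = r := by rw [dist_comm]; simp [hr]; ring
      rw [this, max_eq_right hrpos.le] at h0
      exact hrpos.ne' h0

theorem stmt10 (P : Ideal R01) (hP : P.IsPrime) :
    ∃! M : Ideal R01, M.IsMaximal ∧ P ≤ M := by
  obtain ⟨M, hM, hPM⟩ := P.exists_le_maximal hP.ne_top
  exact ⟨M, ⟨hM, hPM⟩, fun M' h' => maximal_eq P hP M' M h' ⟨hM, hPM⟩⟩
end

section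
/- There exists a prime ideal P of C([0,1], ℝ) and a point γ ∈ [0,1] such that P is strictly contained in M_γ = {f : f(γ) = 0}. -/
open Set Polynomial

noncomputable def gfun : R01 := ⟨fun t => (t : ℝ), continuous_subtype_val⟩

def γ0 : I01 := ⟨0, by norm_num⟩

def Pgood (f : R01) : Prop := ∃ ε > 0, ∀ t : I01, 0 < (t : ℝ) → (t : ℝ) < ε → f t ≠ 0

lemma pgood_one : Pgood 1 := ⟨1, one_pos, fun t _ _ => one_ne_zero⟩

lemma pgood_mul {f h : R01} (hf : Pgood f) (hh : Pgood h) : Pgood (f * h) := by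
  obtain ⟨ε, hε, H⟩ := hf
  obtain ⟨δ, hδ, H'⟩ := hh
  refine ⟨min ε δ, lt_min hε hδ, fun t ht ht' => ?_⟩
  exact mul_ne_zero (H t ht (ht'.trans_le (min_le_left _ _)))
    (H' t ht (ht'.trans_le (min_le_right _ _)))

lemma pgood_gen {f : R01} (hf : f = gfun ∨ f γ0 ≠ 0) : Pgood f := by
  rcases hf with rfl | hf
  · exact ⟨1, one_pos, fun t ht _ => ne_of_gt ht⟩
  · have hopen : IsOpen {t : I01 | f t ≠ 0} :=
      isOpen_compl_singleton.preimage f.continuous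
    obtain ⟨ε, hε, hball⟩ := Metric.isOpen_iff.mp hopen γ0 hf
    refine ⟨ε, hε, fun t ht ht' => ?_⟩
    apply hball
    rw [Metric.mem_ball]
    have : dist t γ0 = |(t : ℝ) - 0| := rfl
    rw [this, sub_zero, abs_of_pos ht]
    exact ht'

theorem stmt11 : ∃ (P : Ideal R01) (γ : I01), P.IsPrime ∧ P < RingHom.ker (evalHom γ) := by
  set T : Set R01 := {gfun} ∪ {f : R01 | f γ0 ≠ 0} with hT
  set S : Submonoid R01 := Submonoid.closure T with hS
  have hSgood : ∀ f ∈ S, Pgood f := by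
    intro f hf
    induction hf using Submonoid.closure_induction with
    | mem x hx => exact pgood_gen (by simpa [hT] using hx)
    | one => exact pgood_one
    | mul x y _ _ hx hy => exact pgood_mul hx hy
  have h0 : (0 : R01) ∉ S := by
    intro h
    obtain ⟨ε, hε, H⟩ := hSgood 0 h
    set t : ℝ := min ε 1 / 2 with htdef
    have ht0 : 0 < t := by positivity
    have ht1 : t ≤ 1 := by
      have : min ε 1 ≤ 1 := min_le_right _ _
      linarith
    have htε : t < ε := by
      have : min ε 1 ≤ ε := min_le_left _ _
      linarith
    exact H ⟨t, ht0.le, ht1⟩ ht0 htε rfl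
  have hdisj : Disjoint ((⊥ : Ideal R01) : Set R01) (S : Set R01) := by
    rw [Set.disjoint_left]
    intro x hx
    rw [SetLike.mem_coe, Ideal.mem_bot] at hx
    subst hx; exact h0
  obtain ⟨P, hP, -, hPd⟩ := Ideal.exists_le_prime_disjoint ⊥ S hdisj
  refine ⟨P, γ0, hP, ?_⟩
  have hle : P ≤ RingHom.ker (evalHom γ0) := by
    intro x hx
    rw [RingHom.mem_ker]
    by_contra hne
    exact Set.disjoint_left.mp hPd hx (Submonoid.subset_closure (Or.inr hne))
  have hgS : gfun ∈ S := Submonoid.subset_closure (Or.inl rfl)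
  have hgker : gfun ∈ RingHom.ker (evalHom γ0) := by
    rw [RingHom.mem_ker]; rfl
  refine lt_of_le_of_ne hle fun h => ?_
  exact Set.disjoint_left.mp hPd (h ▸ hgker) hgS
end
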